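/- Let s ∈ (0,1), set s₀' = min(1−s, 1/2), and let ψ_s(z) = (2^{1−s}/Γ(s)) z^s K_s(z) for z > 0. Let a > 0 and r ≥ s₀' − s. Then there exists a constant c > 0, depending only on r and s, such that for every z ≥ a it holds |z^{r} ψ_s'(z)| ≤ c · e^{−z/2} · (2^{1−s}/Γ(s)) a^{s₀'} e^{a} K_{1−s}(a), where ψ_s' denotes the derivative of ψ_s. -/

import Mathlib

/-- The modified Bessel function of the second kind,
`K_ν(z) = ∫₀^∞ exp(−z cosh t) cosh(ν t) dt`. -/
noncomputable def besselK (ν z : ℝ) : ℝ :=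
  ∫ t in Set.Ioi (0:ℝ), Real.exp (-z * Real.cosh t) * Real.cosh (ν * t)

/-- `ψ_s(z) = (2^{1−s}/Γ(s)) z^s K_s(z)`. -/
noncomputable def psi (s z : ℝ) : ℝ :=
  (2 ^ (1 - s) / Real.Gamma s) * z ^ s * besselK s z


open Real MeasureTheory Set Filter Topology

namespace BesselAux

lemma cosh_le_exp_self {t : ℝ} (ht : 0 ≤ t) : Real.cosh t ≤ Real.exp t := by
  rw [Real.cosh_eq]
  nlinarith [Real.exp_pos t, Real.exp_pos (-t), Real.exp_le_exp.2 (by linarith : -t ≤ t)]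

lemma exp_le_two_cosh (t : ℝ) : Real.exp t ≤ 2 * Real.cosh t := by
  rw [Real.cosh_eq]; nlinarith [Real.exp_pos (-t)]

lemma abs_sinh_le_exp {t : ℝ} (ht : 0 ≤ t) : |Real.sinh t| ≤ Real.exp t := by
  rw [abs_le, Real.sinh_eq]
  constructor <;> nlinarith [Real.exp_pos t, Real.exp_pos (-t),
    Real.exp_le_exp.2 (by linarith : -t ≤ t)]

lemma cosh_mul_le_exp {ν t : ℝ} (ht : 0 ≤ t) : Real.cosh (ν * t) ≤ Real.exp (|ν| * t) := by
  calc Real.cosh (ν * t) = Real.cosh (|ν * t|) := (Real.cosh_abs _).symm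
    _ ≤ Real.exp (|ν * t|) := cosh_le_exp_self (abs_nonneg _)
    _ = Real.exp (|ν| * t) := by rw [abs_mul, abs_of_nonneg ht]

/-- Key linear estimate: `c*t - z*cosh t ≤ D - t` for `t ≥ 0`. -/
lemma lin_sub_cosh_le (z c : ℝ) (hz : 0 < z) :
    ∃ D : ℝ, ∀ t : ℝ, 0 ≤ t → c * t - z * Real.cosh t ≤ D - t := by
  set k : ℝ := 2 * (|c| + 1) / z with hk
  have hkpos : 0 < k := by positivity
  refine ⟨(|c| + 1) * (Real.log k - 1), fun t ht => ?_⟩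
  have h1 : t - Real.log k + 1 ≤ Real.exp t / k := by
    have := Real.add_one_le_exp (t - Real.log k)
    rwa [Real.exp_sub, Real.exp_log hkpos] at this
  have h2 : Real.exp t ≤ 2 * Real.cosh t := exp_le_two_cosh t
  have h1' : (t - Real.log k + 1) * k ≤ Real.exp t := (le_div_iff₀ hkpos).1 h1
  have h4 : z * ((t - Real.log k + 1) * k) ≤ z * (2 * Real.cosh t) :=
    mul_le_mul_of_nonneg_left (h1'.trans h2) hz.le
  have h5 : z * ((t - Real.log k + 1) * k) = 2 * (|c| + 1) * (t - Real.log k + 1) := by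
    have hzk : z * k = 2 * (|c| + 1) := by rw [hk]; field_simp
    rw [show z * ((t - Real.log k + 1) * k) = z * k * (t - Real.log k + 1) by ring, hzk]
  have hct : c * t ≤ |c| * t := mul_le_mul_of_nonneg_right (le_abs_self c) ht
  linarith

lemma tendsto_exp_lin_sub_cosh (z c : ℝ) (hz : 0 < z) :
    Tendsto (fun t => Real.exp (c * t - z * Real.cosh t)) atTop (𝓝 0) := by
  obtain ⟨D, hD⟩ := lin_sub_cosh_le z c hz
  apply squeeze_zero' (Eventually.of_forall fun t => (Real.exp_pos _).le)
    (g := fun t => Real.exp (D - t))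
  · filter_upwards [eventually_ge_atTop (0:ℝ)] with t ht
    exact Real.exp_le_exp.2 (hD t ht)
  · have h : Tendsto (fun t : ℝ => D - t) atTop atBot := tendsto_atBot_add_const_left _ D tendsto_neg_atTop_atBot |>.congr (fun t => by ring)
    exact Real.tendsto_exp_atBot.comp h

lemma integrableOn_exp_lin_sub_cosh (z c : ℝ) (hz : 0 < z) :
    IntegrableOn (fun t => Real.exp (c * t - z * Real.cosh t)) (Ioi (0:ℝ)) := by
  obtain ⟨D, hD⟩ := lin_sub_cosh_le z c hz
  have hg : IntegrableOn (fun t => Real.exp D * Real.exp (-(1 : ℝ) * t)) (Ioi (0:ℝ)) :=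
    (exp_neg_integrableOn_Ioi 0 one_pos).const_mul _
  refine hg.mono' ?_ ?_
  · exact (Continuous.aestronglyMeasurable (by continuity)).restrict
  · rw [ae_restrict_iff' measurableSet_Ioi]
    filter_upwards with t ht
    rw [Real.norm_eq_abs, abs_of_pos (Real.exp_pos _), ← Real.exp_add]
    exact Real.exp_le_exp.2 (by have := hD t ht.le; linarith)

/-- Generic domination criterion for integrability on `Ioi 0`. -/
lemma integrableOn_of_le_exp {f : ℝ → ℝ} (z c C : ℝ) (hz : 0 < z) (hf : Continuous f)
    (hb : ∀ t : ℝ, 0 < t → |f t| ≤ C * Real.exp (c * t - z * Real.cosh t)) :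
    IntegrableOn f (Ioi (0:ℝ)) := by
  refine ((integrableOn_exp_lin_sub_cosh z c hz).const_mul C).mono'
    (hf.aestronglyMeasurable.restrict) ?_
  rw [ae_restrict_iff' measurableSet_Ioi]
  filter_upwards with t ht
  simpa [Real.norm_eq_abs] using hb t ht




variable {ν z : ℝ}

lemma integrableOn_f1 (ν : ℝ) (hz : 0 < z) :
    IntegrableOn (fun t => Real.exp (-z * Real.cosh t) * Real.cosh (ν * t)) (Set.Ioi (0:ℝ)) := by
  refine integrableOn_of_le_exp z |ν| 1 hz (by continuity) fun t ht => ?_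
  rw [abs_mul, abs_of_pos (Real.exp_pos _), abs_of_pos (Real.cosh_pos _), one_mul,
    show |ν| * t - z * Real.cosh t = -z * Real.cosh t + |ν| * t by ring, Real.exp_add]
  exact mul_le_mul_of_nonneg_left (cosh_mul_le_exp ht.le) (Real.exp_pos _).le

lemma integrableOn_f2 (ν : ℝ) (hz : 0 < z) :
    IntegrableOn (fun t => Real.exp (-z * Real.cosh t) * (Real.sinh t * Real.sinh (ν * t)))
      (Set.Ioi (0:ℝ)) := by
  refine integrableOn_of_le_exp z (1 + |ν|) 1 hz (by continuity) fun t ht => ?_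
  rw [one_mul, abs_mul, abs_mul, abs_of_pos (Real.exp_pos _)]
  have h1 : |Real.sinh t| ≤ Real.exp t := abs_sinh_le_exp ht.le
  have h2 : |Real.sinh (ν * t)| ≤ Real.exp (|ν| * t) := by
    calc |Real.sinh (ν * t)| ≤ Real.cosh (ν * t) := by
          rw [Real.sinh_eq, Real.cosh_eq, abs_le]
          constructor <;> nlinarith [Real.exp_pos (ν*t), Real.exp_pos (-(ν*t))]
      _ ≤ Real.exp (|ν| * t) := cosh_mul_le_exp ht.le
  calc Real.exp (-z * Real.cosh t) * (|Real.sinh t| * |Real.sinh (ν * t)|)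
      ≤ Real.exp (-z * Real.cosh t) * (Real.exp t * Real.exp (|ν| * t)) := by
        apply mul_le_mul_of_nonneg_left _ (Real.exp_pos _).le
        exact mul_le_mul h1 h2 (abs_nonneg _) (Real.exp_pos _).le
    _ = Real.exp ((1 + |ν|) * t - z * Real.cosh t) := by rw [← Real.exp_add, ← Real.exp_add]; ring_nf

lemma integrableOn_f3 (ν : ℝ) (hz : 0 < z) :
    IntegrableOn (fun t => Real.cosh t * Real.exp (-z * Real.cosh t) * Real.cosh (ν * t))
      (Set.Ioi (0:ℝ)) := by
  refine integrableOn_of_le_exp z (1 + |ν|) 1 hz (by continuity) fun t ht => ?_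
  rw [one_mul, abs_mul, abs_mul, abs_of_pos (Real.exp_pos _), abs_of_pos (Real.cosh_pos _),
    abs_of_pos (Real.cosh_pos _)]
  have h1 : Real.cosh t ≤ Real.exp t := cosh_le_exp_self ht.le
  have h2 : Real.cosh (ν * t) ≤ Real.exp (|ν| * t) := cosh_mul_le_exp ht.le
  calc Real.cosh t * Real.exp (-z * Real.cosh t) * Real.cosh (ν * t)
      ≤ Real.exp t * Real.exp (-z * Real.cosh t) * Real.exp (|ν| * t) := by
        apply mul_le_mul _ h2 (Real.cosh_pos _).le (by positivity)
        exact mul_le_mul_of_nonneg_right h1 (Real.exp_pos _).le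
    _ = Real.exp ((1 + |ν|) * t - z * Real.cosh t) := by
        rw [← Real.exp_add, ← Real.exp_add]; ring_nf

lemma hasDerivAt_besselK (ν : ℝ) (hz : 0 < z) :
    HasDerivAt (besselK ν)
      (∫ t in Set.Ioi (0:ℝ),
        -(Real.cosh t * Real.exp (-z * Real.cosh t) * Real.cosh (ν * t))) z := by
  have hb : IntegrableOn (fun t => Real.exp ((1 + |ν|) * t - (z/2) * Real.cosh t))
      (Set.Ioi (0:ℝ)) := integrableOn_exp_lin_sub_cosh (z/2) (1 + |ν|) (by linarith)
  have key := hasDerivAt_integral_of_dominated_loc_of_deriv_le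
    (F := fun x t => Real.exp (-x * Real.cosh t) * Real.cosh (ν * t))
    (F' := fun x t => -(Real.cosh t * Real.exp (-x * Real.cosh t) * Real.cosh (ν * t)))
    (x₀ := z) (s := Metric.ball z (z/2))
    (μ := MeasureTheory.volume.restrict (Set.Ioi (0:ℝ)))
    (bound := fun t => Real.exp ((1 + |ν|) * t - (z/2) * Real.cosh t))
    (Metric.ball_mem_nhds _ (by linarith))
    (Filter.Eventually.of_forall fun x =>
      (Continuous.aestronglyMeasurable (by continuity)).restrict)
    (integrableOn_f1 ν hz)
    ((Continuous.aestronglyMeasurable (by continuity)).restrict)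
    ?_ hb ?_
  · exact key.2
  · rw [MeasureTheory.ae_restrict_iff' measurableSet_Ioi]
    filter_upwards with t ht x hx
    rw [Metric.mem_ball, Real.dist_eq, abs_lt] at hx
    have hx2 : z/2 < x := by linarith [hx.1]
    rw [Real.norm_eq_abs, abs_neg, abs_mul, abs_mul, abs_of_pos (Real.exp_pos _),
      abs_of_pos (Real.cosh_pos _), abs_of_pos (Real.cosh_pos _)]
    have h1 : Real.cosh t ≤ Real.exp t := cosh_le_exp_self ht.le
    have h2 : Real.cosh (ν * t) ≤ Real.exp (|ν| * t) := cosh_mul_le_exp ht.le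
    have h3 : Real.exp (-x * Real.cosh t) ≤ Real.exp (-(z/2) * Real.cosh t) := by
      apply Real.exp_le_exp.2
      have := Real.cosh_pos t
      nlinarith
    calc Real.cosh t * Real.exp (-x * Real.cosh t) * Real.cosh (ν * t)
        ≤ Real.exp t * Real.exp (-(z/2) * Real.cosh t) * Real.exp (|ν| * t) := by
          apply mul_le_mul _ h2 (Real.cosh_pos _).le (by positivity)
          exact mul_le_mul h1 h3 (Real.exp_pos _).le (Real.exp_pos _).le
      _ = Real.exp ((1 + |ν|) * t - z/2 * Real.cosh t) := by
          rw [← Real.exp_add, ← Real.exp_add]; ring_nf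
  · filter_upwards with t x _
    have hinner : HasDerivAt (fun x : ℝ => -x * Real.cosh t) (-Real.cosh t) x := by
      simpa using ((hasDerivAt_id x).neg.mul_const (Real.cosh t))
    have hexp : HasDerivAt (fun x : ℝ => Real.exp (-x * Real.cosh t))
        (Real.exp (-x * Real.cosh t) * -Real.cosh t) x := (Real.hasDerivAt_exp _).comp x hinner
    have := hexp.mul_const (Real.cosh (ν * t))
    refine this.congr_deriv ?_
    ring

lemma ibp_identity (ν : ℝ) (hz : 0 < z) :
    ν * besselK ν z =
      z * ∫ t in Set.Ioi (0:ℝ),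
        Real.exp (-z * Real.cosh t) * (Real.sinh t * Real.sinh (ν * t)) := by
  set g : ℝ → ℝ := fun t => Real.exp (-z * Real.cosh t) * Real.sinh (ν * t) with hg
  set g' : ℝ → ℝ := fun t =>
    ν * (Real.exp (-z * Real.cosh t) * Real.cosh (ν * t)) -
      z * (Real.exp (-z * Real.cosh t) * (Real.sinh t * Real.sinh (ν * t))) with hg'
  have hderiv : ∀ x ∈ Set.Ioi (0:ℝ), HasDerivAt g (g' x) x := by
    intro x _
    have hA : HasDerivAt (fun t : ℝ => Real.exp (-z * Real.cosh t))
        (Real.exp (-z * Real.cosh x) * (-z * Real.sinh x)) x := by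
      have hin : HasDerivAt (fun t : ℝ => -z * Real.cosh t) (-z * Real.sinh x) x :=
        (Real.hasDerivAt_cosh x).const_mul (-z)
      exact (Real.hasDerivAt_exp _).comp x hin
    have hB : HasDerivAt (fun t : ℝ => Real.sinh (ν * t)) (Real.cosh (ν * x) * ν) x := by
      have hin : HasDerivAt (fun t : ℝ => ν * t) ν x := by
        simpa using (hasDerivAt_id x).const_mul ν
      exact (Real.hasDerivAt_sinh _).comp x hin
    have := hA.mul hB
    refine this.congr_deriv ?_
    simp only [hg']
    ring
  have hint : MeasureTheory.IntegrableOn g' (Set.Ioi (0:ℝ)) :=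
    ((integrableOn_f1 ν hz).const_mul ν).sub ((integrableOn_f2 ν hz).const_mul z)
  have htend : Filter.Tendsto g Filter.atTop (nhds 0) := by
    apply squeeze_zero_norm' ?_ (tendsto_exp_lin_sub_cosh z |ν| hz)
    filter_upwards [Filter.eventually_ge_atTop (0:ℝ)] with t ht
    rw [Real.norm_eq_abs, hg]
    calc |Real.exp (-z * Real.cosh t) * Real.sinh (ν * t)|
        = Real.exp (-z * Real.cosh t) * |Real.sinh (ν * t)| := by
          rw [abs_mul, abs_of_pos (Real.exp_pos _)]
      _ ≤ Real.exp (-z * Real.cosh t) * Real.cosh (ν * t) := by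
          apply mul_le_mul_of_nonneg_left _ (Real.exp_pos _).le
          rw [Real.sinh_eq, Real.cosh_eq, abs_le]
          constructor <;> nlinarith [Real.exp_pos (ν*t), Real.exp_pos (-(ν*t))]
      _ ≤ Real.exp (-z * Real.cosh t) * Real.exp (|ν| * t) :=
          mul_le_mul_of_nonneg_left (cosh_mul_le_exp ht) (Real.exp_pos _).le
      _ = Real.exp (|ν| * t - z * Real.cosh t) := by rw [← Real.exp_add]; ring_nf
  have hcont : ContinuousWithinAt g (Set.Ici 0) 0 :=
    (Continuous.continuousWithinAt (by continuity))
  have h0 : g 0 = 0 := by simp [hg]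
  have key := MeasureTheory.integral_Ioi_of_hasDerivAt_of_tendsto hcont hderiv hint htend
  rw [h0, sub_zero] at key
  have hsplit : (∫ t in Set.Ioi (0:ℝ), g' t) =
      ν * besselK ν z -
        z * ∫ t in Set.Ioi (0:ℝ),
          Real.exp (-z * Real.cosh t) * (Real.sinh t * Real.sinh (ν * t)) := by
    rw [hg']
    rw [MeasureTheory.integral_sub ((integrableOn_f1 ν hz).const_mul ν)
      ((integrableOn_f2 ν hz).const_mul z),
      MeasureTheory.integral_const_mul, MeasureTheory.integral_const_mul]
    rfl
  rw [hsplit] at key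
  linarith [key]

lemma hasDerivAt_besselK' (ν : ℝ) (hz : 0 < z) :
    HasDerivAt (besselK ν) (-besselK (1 - ν) z - (ν / z) * besselK ν z) z := by
  have h := hasDerivAt_besselK ν hz
  convert h using 1
  have e1 : ∀ t : ℝ, Real.cosh t * Real.exp (-z * Real.cosh t) * Real.cosh (ν * t) =
      Real.exp (-z * Real.cosh t) * Real.cosh ((1 - ν) * t) +
        Real.exp (-z * Real.cosh t) * (Real.sinh t * Real.sinh (ν * t)) := by
    intro t
    have h1t : (1 - ν) * t = t - ν * t := by ring
    rw [h1t, Real.cosh_sub]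
    ring
  have hI : (∫ t in Set.Ioi (0:ℝ),
        -(Real.cosh t * Real.exp (-z * Real.cosh t) * Real.cosh (ν * t))) =
      -(∫ t in Set.Ioi (0:ℝ), Real.cosh t * Real.exp (-z * Real.cosh t) * Real.cosh (ν * t)) :=
    MeasureTheory.integral_neg _
  rw [hI]
  have hsplit : (∫ t in Set.Ioi (0:ℝ),
        Real.cosh t * Real.exp (-z * Real.cosh t) * Real.cosh (ν * t)) =
      besselK (1 - ν) z +
        ∫ t in Set.Ioi (0:ℝ), Real.exp (-z * Real.cosh t) * (Real.sinh t * Real.sinh (ν * t)) := by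
    rw [show (fun t => Real.cosh t * Real.exp (-z * Real.cosh t) * Real.cosh (ν * t)) =
        fun t => Real.exp (-z * Real.cosh t) * Real.cosh ((1 - ν) * t) +
          Real.exp (-z * Real.cosh t) * (Real.sinh t * Real.sinh (ν * t)) from funext e1]
    rw [MeasureTheory.integral_add (integrableOn_f1 (1 - ν) hz) (integrableOn_f2 ν hz)]
    rfl
  have hibp := ibp_identity (z := z) ν hz
  have hzne : z ≠ 0 := ne_of_gt hz
  have hI2 : (∫ t in Set.Ioi (0:ℝ),
      Real.exp (-z * Real.cosh t) * (Real.sinh t * Real.sinh (ν * t))) =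
      ν * besselK ν z / z := by
    rw [eq_div_iff hzne]; linarith
  rw [hsplit, hI2]
  ring

lemma deriv_psi (s : ℝ) (hs : 0 < s) (hz : 0 < z) :
    deriv (psi s) z = -((2 ^ (1 - s) / Real.Gamma s) * z ^ s * besselK (1 - s) z) := by
  have h1 : HasDerivAt (fun z : ℝ => z ^ s) (s * z ^ (s - 1)) z :=
    Real.hasDerivAt_rpow_const (Or.inl hz.ne')
  have h2 := hasDerivAt_besselK' (z := z) s hz
  have h3 := (h1.mul h2).const_mul ((2:ℝ) ^ (1 - s) / Real.Gamma s)
  have heq : (fun z : ℝ => (2 ^ (1 - s) / Real.Gamma s) * (z ^ s * besselK s z)) = psi s := by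
    funext x; rw [psi]; ring
  replace h3 : HasDerivAt (psi s) (2 ^ (1 - s) / Real.Gamma s * (s * z ^ (s - 1) * besselK s z + z ^ s * (-besselK (1 - s) z - s / z * besselK s z))) z := by rw [← heq]; exact h3
  rw [h3.deriv]
  have hz1 : z ^ (s - 1) = z ^ s / z := Real.rpow_sub_one hz.ne' s
  rw [hz1]
  field_simp [(Real.Gamma_pos_of_pos hs).ne']
  ring

lemma besselK_nonneg (ν : ℝ) (z : ℝ) : 0 ≤ besselK ν z :=
  MeasureTheory.setIntegral_nonneg measurableSet_Ioi fun t _ => by positivity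

lemma besselK_le_exp_mul {ν a z : ℝ} (ha : 0 < a) (haz : a ≤ z) :
    besselK ν z ≤ Real.exp (a - z) * besselK ν a := by
  have hz : 0 < z := lt_of_lt_of_le ha haz
  rw [besselK, besselK, ← MeasureTheory.integral_const_mul]
  refine MeasureTheory.setIntegral_mono_on (integrableOn_f1 ν hz)
    ((integrableOn_f1 ν ha).const_mul _) measurableSet_Ioi fun t ht => ?_
  rw [← mul_assoc, ← Real.exp_add]
  apply mul_le_mul_of_nonneg_right _ (Real.cosh_pos _).le
  apply Real.exp_le_exp.2
  nlinarith [Real.one_le_cosh t]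

lemma integral_exp_mul_Ioc {ν T : ℝ} (hν : 0 < ν) (hT : 0 ≤ T) :
    ∫ t in Set.Ioc (0:ℝ) T, Real.exp (ν * t) = (Real.exp (ν * T) - 1) / ν := by
  rw [← intervalIntegral.integral_of_le hT]
  have hF : ∀ t ∈ Set.uIcc (0:ℝ) T, HasDerivAt (fun u => Real.exp (ν * u) / ν)
      (Real.exp (ν * t)) t := by
    intro t _
    have hin : HasDerivAt (fun u : ℝ => ν * u) ν t := by
      simpa using (hasDerivAt_id t).const_mul ν
    have := ((Real.hasDerivAt_exp (ν * t)).comp t hin).div_const ν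
    refine this.congr_deriv ?_
    rw [mul_div_cancel_right₀ _ hν.ne']
  rw [intervalIntegral.integral_eq_sub_of_hasDerivAt hF
    ((Real.continuous_exp.comp (continuous_const.mul continuous_id)).intervalIntegrable 0 T)]
  rw [mul_zero, Real.exp_zero]
  ring

lemma besselK_upper {ν z : ℝ} (hν : 0 < ν) (hν1 : ν ≤ 1) (hz : 0 < z) (hz2 : z ≤ 1/2) :
    besselK ν z ≤ 4 * (1/ν + 1) * z ^ (-ν) := by
  set T : ℝ := Real.log (4 / z) with hTdef
  have h4z : (1:ℝ) < 4 / z := by rw [lt_div_iff₀ hz]; linarith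
  have hT : 0 < T := Real.log_pos h4z
  have heT : Real.exp T = 4 / z := Real.exp_log (by positivity)
  have hzT : z = 4 * Real.exp (-T) := by
    rw [Real.exp_neg, heT]; field_simp
  have hint1 : MeasureTheory.IntegrableOn
      (fun t => Real.exp (-z * Real.cosh t) * Real.cosh (ν * t)) (Set.Ioc (0:ℝ) T) :=
    (integrableOn_f1 ν hz).mono_set Set.Ioc_subset_Ioi_self
  have hint2 : MeasureTheory.IntegrableOn
      (fun t => Real.exp (-z * Real.cosh t) * Real.cosh (ν * t)) (Set.Ioi T) :=
    (integrableOn_f1 ν hz).mono_set (Set.Ioi_subset_Ioi hT.le)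
  have hsplit : besselK ν z =
      (∫ t in Set.Ioc (0:ℝ) T, Real.exp (-z * Real.cosh t) * Real.cosh (ν * t)) +
      ∫ t in Set.Ioi T, Real.exp (-z * Real.cosh t) * Real.cosh (ν * t) := by
    rw [besselK, ← Set.Ioc_union_Ioi_eq_Ioi hT.le,
      MeasureTheory.setIntegral_union (Set.Ioc_disjoint_Ioi le_rfl) measurableSet_Ioi hint1 hint2]
  have hhead : (∫ t in Set.Ioc (0:ℝ) T, Real.exp (-z * Real.cosh t) * Real.cosh (ν * t)) ≤
      Real.exp (ν * T) * (1/ν) := by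
    have h1 : (∫ t in Set.Ioc (0:ℝ) T, Real.exp (-z * Real.cosh t) * Real.cosh (ν * t)) ≤
        ∫ t in Set.Ioc (0:ℝ) T, Real.exp (ν * t) := by
      refine MeasureTheory.setIntegral_mono_on hint1
        ((Real.continuous_exp.comp (continuous_const.mul continuous_id)).integrableOn_Ioc)
        measurableSet_Ioc fun t ht => ?_
      calc Real.exp (-z * Real.cosh t) * Real.cosh (ν * t)
          ≤ 1 * Real.exp (ν * t) := by
            apply mul_le_mul _ _ (Real.cosh_pos _).le zero_le_one
            · exact Real.exp_le_one_iff.2 (by nlinarith [Real.cosh_pos t])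
            · have := cosh_mul_le_exp (ν := ν) ht.1.le
              rwa [abs_of_pos hν] at this
        _ = Real.exp (ν * t) := one_mul _
    rw [integral_exp_mul_Ioc hν hT.le] at h1
    calc (∫ t in Set.Ioc (0:ℝ) T, Real.exp (-z * Real.cosh t) * Real.cosh (ν * t))
        ≤ (Real.exp (ν * T) - 1) / ν := h1
      _ ≤ Real.exp (ν * T) * (1/ν) := by
          rw [mul_one_div]
          gcongr
          linarith
  have htail : (∫ t in Set.Ioi T, Real.exp (-z * Real.cosh t) * Real.cosh (ν * t)) ≤
      Real.exp (ν * T) := by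
    have hmaj : MeasureTheory.IntegrableOn
        (fun t => Real.exp (ν * T) * Real.exp (T - 2) * Real.exp (-t)) (Set.Ioi T) := by
      have := (exp_neg_integrableOn_Ioi T (zero_lt_one)).const_mul
        (Real.exp (ν * T) * Real.exp (T - 2))
      simp only [neg_mul, one_mul] at this; exact this
    have h1 : (∫ t in Set.Ioi T, Real.exp (-z * Real.cosh t) * Real.cosh (ν * t)) ≤
        ∫ t in Set.Ioi T, Real.exp (ν * T) * Real.exp (T - 2) * Real.exp (-t) := by
      refine MeasureTheory.setIntegral_mono_on hint2 hmaj measurableSet_Ioi fun t ht => ?_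
      have htT : T ≤ t := le_of_lt ht
      have ht0 : 0 ≤ t := hT.le.trans htT
      have hcosh : 2 + 2 * (t - T) ≤ z * Real.cosh t := by
        have h2 : Real.exp t ≤ 2 * Real.cosh t := exp_le_two_cosh t
        have h3 : (t - T) + 1 ≤ Real.exp (t - T) := Real.add_one_le_exp _
        have h4 : Real.exp (t - T) = Real.exp t * Real.exp (-T) := by
          rw [← Real.exp_add]; ring_nf
        rw [hzT]
        nlinarith [Real.exp_pos (-T), Real.exp_pos t]
      have hch : Real.cosh (ν * t) ≤ Real.exp (ν * T + (t - T)) := by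
        refine (cosh_mul_le_exp ht0).trans (Real.exp_le_exp.2 ?_)
        rw [abs_of_pos hν]
        nlinarith
      calc Real.exp (-z * Real.cosh t) * Real.cosh (ν * t)
          ≤ Real.exp (-(2 + 2 * (t - T))) * Real.exp (ν * T + (t - T)) := by
            apply mul_le_mul _ hch (Real.cosh_pos _).le (Real.exp_pos _).le
            exact Real.exp_le_exp.2 (by linarith)
        _ = Real.exp (ν * T) * Real.exp (T - 2) * Real.exp (-t) := by
            rw [← Real.exp_add, ← Real.exp_add, ← Real.exp_add]
            ring_nf
    have h2 : (∫ t in Set.Ioi T, Real.exp (ν * T) * Real.exp (T - 2) * Real.exp (-t)) =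
        Real.exp (ν * T) * Real.exp (T - 2) * Real.exp (-T) := by
      rw [MeasureTheory.integral_const_mul, integral_exp_neg_Ioi]
    refine h1.trans ?_
    rw [h2]
    calc Real.exp (ν * T) * Real.exp (T - 2) * Real.exp (-T)
        = Real.exp (ν * T) * Real.exp (-2) := by
          rw [mul_assoc, ← Real.exp_add, ← Real.exp_add, ← Real.exp_add]
          congr 1; ring
      _ ≤ Real.exp (ν * T) * 1 := by
          apply mul_le_mul_of_nonneg_left _ (Real.exp_pos _).le
          exact Real.exp_le_one_iff.2 (by norm_num)
      _ = Real.exp (ν * T) := mul_one _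
  have hexpT : Real.exp (ν * T) = (4 / z) ^ ν := by
    rw [Real.rpow_def_of_pos (by positivity : (0:ℝ) < 4 / z)]
    congr 1; rw [hTdef]; ring
  have hfour : (4 / z : ℝ) ^ ν ≤ 4 * z ^ (-ν) := by
    rw [Real.div_rpow (by norm_num) hz.le, Real.rpow_neg hz.le, div_eq_mul_inv]
    apply mul_le_mul_of_nonneg_right _ (by positivity)
    calc (4:ℝ) ^ ν ≤ (4:ℝ) ^ (1:ℝ) :=
          Real.rpow_le_rpow_of_exponent_le (by norm_num) hν1
      _ = 4 := Real.rpow_one 4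
  have hνpos : (0:ℝ) < 1/ν + 1 := by positivity
  calc besselK ν z ≤ Real.exp (ν * T) * (1/ν) + Real.exp (ν * T) := by
        rw [hsplit]; exact add_le_add hhead htail
    _ = Real.exp (ν * T) * (1/ν + 1) := by ring
    _ ≤ 4 * z ^ (-ν) * (1/ν + 1) := by
        apply mul_le_mul_of_nonneg_right _ hνpos.le
        rw [hexpT]; exact hfour
    _ = 4 * (1/ν + 1) * z ^ (-ν) := by ring

lemma besselK_lower {ν a : ℝ} (hν : 0 < ν) (ha : 0 < a) (ha2 : a ≤ 1/2) :
    (1 - 2 ^ (-ν)) / (2 * Real.exp 1 * ν) * a ^ (-ν) ≤ besselK ν a := by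
  set T : ℝ := Real.log (1 / a) with hTdef
  have h1a : (1:ℝ) < 1 / a := by rw [lt_div_iff₀ ha]; linarith
  have hT : 0 < T := Real.log_pos h1a
  have heT : Real.exp T = 1 / a := Real.exp_log (by positivity)
  have hlow : ∀ t ∈ Set.Ioc (0:ℝ) T,
      Real.exp (-1) / 2 * Real.exp (ν * t) ≤ Real.exp (-a * Real.cosh t) * Real.cosh (ν * t) := by
    intro t ht
    have hc1 : a * Real.cosh t ≤ 1 := by
      have h1 : Real.cosh t ≤ Real.exp t := cosh_le_exp_self ht.1.le
      have h2 : Real.exp t ≤ Real.exp T := Real.exp_le_exp.2 ht.2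
      have h3 : a * Real.exp T = 1 := by rw [heT]; field_simp
      nlinarith [Real.cosh_pos t]
    have he1 : Real.exp (-1) ≤ Real.exp (-a * Real.cosh t) :=
      Real.exp_le_exp.2 (by linarith)
    have hc2 : Real.exp (ν * t) / 2 ≤ Real.cosh (ν * t) := by
      have := exp_le_two_cosh (ν * t)
      linarith
    calc Real.exp (-1) / 2 * Real.exp (ν * t)
        = Real.exp (-1) * (Real.exp (ν * t) / 2) := by ring
      _ ≤ Real.exp (-a * Real.cosh t) * Real.cosh (ν * t) :=
          mul_le_mul he1 hc2 (by positivity) (Real.exp_pos _).le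
  have hint1 : MeasureTheory.IntegrableOn
      (fun t => Real.exp (-a * Real.cosh t) * Real.cosh (ν * t)) (Set.Ioc (0:ℝ) T) :=
    (integrableOn_f1 ν ha).mono_set Set.Ioc_subset_Ioi_self
  have step1 : (∫ t in Set.Ioc (0:ℝ) T, Real.exp (-1) / 2 * Real.exp (ν * t)) ≤
      ∫ t in Set.Ioc (0:ℝ) T, Real.exp (-a * Real.cosh t) * Real.cosh (ν * t) := by
    refine MeasureTheory.setIntegral_mono_on ?_ hint1 measurableSet_Ioc hlow
    exact ((Real.continuous_exp.comp (continuous_const.mul continuous_id)).integrableOn_Ioc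
      ).const_mul _
  have step2 : (∫ t in Set.Ioc (0:ℝ) T, Real.exp (-a * Real.cosh t) * Real.cosh (ν * t)) ≤
      besselK ν a := by
    rw [besselK]
    refine MeasureTheory.setIntegral_mono_set (integrableOn_f1 ν ha)
      (Filter.Eventually.of_forall fun t => by positivity)
      (HasSubset.Subset.eventuallyLE Set.Ioc_subset_Ioi_self)
  have hcompute : (∫ t in Set.Ioc (0:ℝ) T, Real.exp (-1) / 2 * Real.exp (ν * t)) =
      Real.exp (-1) / 2 * ((Real.exp (ν * T) - 1) / ν) := by
    rw [MeasureTheory.integral_const_mul, integral_exp_mul_Ioc hν hT.le]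
  have hexpT : Real.exp (ν * T) = a ^ (-ν) := by
    rw [Real.rpow_def_of_pos ha, hTdef]
    rw [show Real.log (1/a) = -Real.log a by rw [Real.log_div one_ne_zero ha.ne']; simp]
    congr 1; ring
  have hmul : a ^ (-ν) * 2 ^ (-ν) = (2 * a) ^ (-ν) := by
    rw [Real.mul_rpow (by norm_num) ha.le]; ring
  have h1 : (1:ℝ) ≤ (2 * a) ^ (-ν) :=
    Real.one_le_rpow_of_pos_of_le_one_of_nonpos (by positivity) (by linarith) (by linarith)
  have hkey : (1 - 2 ^ (-ν)) * a ^ (-ν) ≤ a ^ (-ν) - 1 := by nlinarith [hmul, h1]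
  have hfinal : (1 - 2 ^ (-ν)) / (2 * Real.exp 1 * ν) * a ^ (-ν) ≤
      Real.exp (-1) / 2 * ((Real.exp (ν * T) - 1) / ν) := by
    rw [hexpT]
    have e1 : Real.exp (-1) / 2 * ((a ^ (-ν) - 1) / ν) =
        (a ^ (-ν) - 1) / (2 * Real.exp 1 * ν) := by
      rw [Real.exp_neg]
      field_simp
    rw [e1, div_mul_eq_mul_div]
    gcongr
    
  calc (1 - 2 ^ (-ν)) / (2 * Real.exp 1 * ν) * a ^ (-ν)
      ≤ Real.exp (-1) / 2 * ((Real.exp (ν * T) - 1) / ν) := hfinal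
    _ = ∫ t in Set.Ioc (0:ℝ) T, Real.exp (-1) / 2 * Real.exp (ν * t) := hcompute.symm
    _ ≤ _ := step1.trans step2

lemma rpow_le_M0 {ρ z : ℝ} (hρ : 0 < ρ) (hz : 0 < z) :
    z ^ ρ ≤ Real.exp (ρ * Real.log (4 * ρ) - ρ) * Real.exp (z / 4) := by
  rw [Real.rpow_def_of_pos hz, ← Real.exp_add]
  apply Real.exp_le_exp.2
  have h1 : Real.log (z / (4 * ρ)) ≤ z / (4 * ρ) - 1 :=
    Real.log_le_sub_one_of_pos (by positivity)
  rw [Real.log_div hz.ne' (by positivity)] at h1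
  have h2 : Real.log z ≤ Real.log (4 * ρ) + z / (4 * ρ) - 1 := by linarith
  have h3 : ρ * (z / (4 * ρ)) = z / 4 := by field_simp
  nlinarith [mul_le_mul_of_nonneg_left h2 hρ.le, h3]

lemma main_bound (s r : ℝ) (hs : s ∈ Set.Ioo (0:ℝ) 1)
    (hr : min (1 - s) (1/2) - s ≤ r) :
    ∃ c > 0, ∀ a : ℝ, 0 < a → ∀ z : ℝ, a ≤ z →
      z ^ (r + s) * besselK (1 - s) z ≤
        c * Real.exp (-z / 2) *
          (a ^ (min (1 - s) (1/2)) * Real.exp a * besselK (1 - s) a) := by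
  set ν : ℝ := 1 - s with hνdef
  have hν : 0 < ν := by simp only [hνdef]; linarith [hs.2]
  have hν1 : ν ≤ 1 := by simp only [hνdef]; linarith [hs.1]
  set σ : ℝ := min ν (1/2) with hσdef
  have hσpos : 0 < σ := lt_min hν (by norm_num)
  have hσν : σ ≤ ν := min_le_left _ _
  have hσhalf : σ ≤ 1/2 := min_le_right _ _
  set ρ : ℝ := r + s with hρdef
  have hρσ : σ ≤ ρ := by simp only [hρdef]; linarith [hr]
  have hρpos : 0 < ρ := lt_of_lt_of_le hσpos hρσ
  set M₀ : ℝ := Real.exp (ρ * Real.log (4 * ρ) - ρ) with hM₀def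
  have hM₀ : 0 < M₀ := Real.exp_pos _
  set C₁ : ℝ := (1 - 2 ^ (-ν)) / (2 * Real.exp 1 * ν) with hC₁def
  have hC₁ : 0 < C₁ := by
    apply div_pos _ (by positivity)
    have : (2:ℝ) ^ (-ν) < 1 :=
      Real.rpow_lt_one_of_one_lt_of_neg (by norm_num) (by linarith)
    linarith
  set C₂ : ℝ := 4 * (1/ν + 1) with hC₂def
  have hC₂ : 0 < C₂ := by positivity
  set c2 : ℝ := 2 * C₂ * Real.exp 1 * M₀ / C₁ with hc2def
  set c3 : ℝ := Real.exp 1 * C₂ / C₁ with hc3def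
  have h2pos : 0 < c2 := by rw [hc2def]; positivity
  have h3pos : 0 < c3 := by rw [hc3def]; positivity
  refine ⟨2 * M₀ + c2 + c3, by positivity,
    fun a ha z haz => ?_⟩
  have hz0 : 0 < z := lt_of_lt_of_le ha haz
  set c : ℝ := 2 * M₀ + c2 + c3 with hcdef
  set G : ℝ := a ^ σ * Real.exp a * besselK ν a with hGdef
  have hG0 : 0 ≤ G := by
    apply mul_nonneg (mul_nonneg (Real.rpow_nonneg ha.le _) (Real.exp_pos _).le)
      (besselK_nonneg _ _)
  have hGlow : a ≤ 1/2 → C₁ * a ^ (σ - ν) ≤ G := by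
    intro ha2
    have hKa := besselK_lower hν ha ha2
    have e1 : a ^ (σ - ν) = a ^ σ * a ^ (-ν) := by
      rw [show σ - ν = σ + -ν by ring, Real.rpow_add ha]
    calc C₁ * a ^ (σ - ν) = a ^ σ * (C₁ * a ^ (-ν)) := by rw [e1]; ring
      _ ≤ a ^ σ * besselK ν a :=
          mul_le_mul_of_nonneg_left hKa (Real.rpow_nonneg ha.le _)
      _ ≤ Real.exp a * (a ^ σ * besselK ν a) := by
          apply le_mul_of_one_le_left
            (mul_nonneg (Real.rpow_nonneg ha.le _) (besselK_nonneg _ _))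
            (Real.one_le_exp ha.le)
      _ = G := by rw [hGdef]; ring
  have hsuff : ∀ c₀ : ℝ, 0 < c₀ → c₀ ≤ c →
      z ^ ρ * besselK ν z ≤ c₀ * Real.exp (-z/2) * G →
      z ^ ρ * besselK ν z ≤ c * Real.exp (-z/2) * G := by
    intro c₀ hc₀ hcc h
    refine h.trans ?_
    have := mul_le_mul_of_nonneg_right hcc
      (mul_nonneg (Real.exp_pos (-z/2)).le hG0)
    calc c₀ * Real.exp (-z/2) * G = c₀ * (Real.exp (-z/2) * G) := by ring
      _ ≤ c * (Real.exp (-z/2) * G) := this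
      _ = c * Real.exp (-z/2) * G := by ring
  have hzρM : z ^ ρ ≤ M₀ * Real.exp (z/4) := rpow_le_M0 hρpos hz0
  rcases le_or_gt (1/2 : ℝ) a with hcaseA | hcaseA'
  · -- Case A : 1/2 ≤ a
    apply hsuff (2 * M₀) (by positivity) (by linarith)
    have h1 : besselK ν z ≤ Real.exp (a - z) * besselK ν a := besselK_le_exp_mul ha haz
    have haσ : 1/2 ≤ a ^ σ := by
      calc (1/2 : ℝ) = (1/2 : ℝ) ^ (1:ℝ) := (Real.rpow_one _).symm
        _ ≤ (1/2 : ℝ) ^ ((1:ℝ)/2) :=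
            Real.rpow_le_rpow_of_exponent_ge (by norm_num) (by norm_num) (by norm_num)
        _ ≤ (1/2 : ℝ) ^ σ :=
            Real.rpow_le_rpow_of_exponent_ge (by norm_num) (by norm_num) hσhalf
        _ ≤ a ^ σ := Real.rpow_le_rpow (by norm_num) hcaseA hσpos.le
    have t1 : z ^ ρ * besselK ν z ≤ (M₀ * Real.exp (z/4)) * (Real.exp (a - z) * besselK ν a) :=
      mul_le_mul hzρM h1 (besselK_nonneg _ _) (by positivity)
    have t3 : Real.exp (z/4) * Real.exp (a - z) ≤ Real.exp (-z/2) * Real.exp a := by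
      rw [← Real.exp_add, ← Real.exp_add]
      exact Real.exp_le_exp.2 (by linarith)
    have h12 : (1:ℝ) ≤ 2 * a ^ σ := by linarith
    calc z ^ ρ * besselK ν z
        ≤ (M₀ * Real.exp (z/4)) * (Real.exp (a - z) * besselK ν a) := t1
      _ = M₀ * (Real.exp (z/4) * Real.exp (a - z)) * besselK ν a := by ring
      _ ≤ M₀ * (Real.exp (-z/2) * Real.exp a) * besselK ν a :=
          mul_le_mul_of_nonneg_right (mul_le_mul_of_nonneg_left t3 hM₀.le)
            (besselK_nonneg _ _)
      _ = (M₀ * 1) * (Real.exp (-z/2) * Real.exp a * besselK ν a) := by ring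
      _ ≤ (M₀ * (2 * a ^ σ)) * (Real.exp (-z/2) * Real.exp a * besselK ν a) := by
          apply mul_le_mul_of_nonneg_right
            (mul_le_mul_of_nonneg_left h12 hM₀.le)
          exact mul_nonneg (mul_nonneg (Real.exp_pos _).le (Real.exp_pos _).le)
            (besselK_nonneg _ _)
      _ = 2 * M₀ * Real.exp (-z/2) * G := by rw [hGdef]; ring
  · rcases le_or_gt (1/2 : ℝ) z with hcaseB | hcaseC
    · -- Case B : a < 1/2 ≤ z
      apply hsuff c2 h2pos (by linarith)
      have h1 : besselK ν z ≤ Real.exp (1/2 - z) * besselK ν (1/2) :=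
        besselK_le_exp_mul (by norm_num) hcaseB
      have h2 : besselK ν (1/2) ≤ C₂ * ((1/2:ℝ)) ^ (-ν) :=
        besselK_upper hν hν1 (by norm_num) le_rfl
      have h3 : ((1/2:ℝ)) ^ (-ν) ≤ 2 := by
        have e : ((1/2:ℝ)) ^ (-ν) = (2:ℝ) ^ ν := by
          rw [one_div, Real.inv_rpow (by norm_num : (0:ℝ) ≤ 2),
            ← Real.rpow_neg (by norm_num : (0:ℝ) ≤ 2), neg_neg]
        rw [e]
        calc (2:ℝ) ^ ν ≤ (2:ℝ) ^ (1:ℝ) :=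
              Real.rpow_le_rpow_of_exponent_le (by norm_num) hν1
          _ = 2 := Real.rpow_one 2
      have hK12 : besselK ν (1/2) ≤ 2 * C₂ := by
        refine h2.trans ?_
        calc C₂ * ((1/2:ℝ)) ^ (-ν) ≤ C₂ * 2 := mul_le_mul_of_nonneg_left h3 hC₂.le
          _ = 2 * C₂ := by ring
      have haσν : (1:ℝ) ≤ a ^ (σ - ν) :=
        Real.one_le_rpow_of_pos_of_le_one_of_nonpos ha (by linarith) (by linarith)
      have hG1 : C₁ ≤ G := by
        calc C₁ = C₁ * 1 := (mul_one _).symm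
          _ ≤ C₁ * a ^ (σ - ν) := mul_le_mul_of_nonneg_left haσν hC₁.le
          _ ≤ G := hGlow (by linarith)
      have t1 : z ^ ρ * besselK ν z ≤
          (M₀ * Real.exp (z/4)) * (Real.exp (1/2 - z) * (2 * C₂)) := by
        apply mul_le_mul hzρM _ (besselK_nonneg _ _) (by positivity)
        refine h1.trans (mul_le_mul_of_nonneg_left hK12 (Real.exp_pos _).le)
      have t2 : Real.exp (z/4) * Real.exp (1/2 - z) ≤ Real.exp 1 * Real.exp (-z/2) := by
        rw [← Real.exp_add, ← Real.exp_add]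
        exact Real.exp_le_exp.2 (by linarith)
      calc z ^ ρ * besselK ν z
          ≤ (M₀ * Real.exp (z/4)) * (Real.exp (1/2 - z) * (2 * C₂)) := t1
        _ = (2 * C₂ * M₀) * (Real.exp (z/4) * Real.exp (1/2 - z)) := by ring
        _ ≤ (2 * C₂ * M₀) * (Real.exp 1 * Real.exp (-z/2)) :=
            mul_le_mul_of_nonneg_left t2 (by positivity)
        _ = c2 * Real.exp (-z/2) * C₁ := by
            rw [hc2def]
            field_simp
        _ ≤ c2 * Real.exp (-z/2) * G :=
            mul_le_mul_of_nonneg_left hG1 (by positivity)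
    · -- Case C : z < 1/2
      apply hsuff c3 h3pos (by linarith)
      have h1 : besselK ν z ≤ C₂ * z ^ (-ν) := besselK_upper hν hν1 hz0 hcaseC.le
      have hzρν : z ^ ρ * z ^ (-ν) = z ^ (ρ - ν) := by
        rw [← Real.rpow_add hz0]
        congr 1
      have hstep : z ^ (ρ - ν) ≤ a ^ (σ - ν) := by
        rcases le_or_gt (ρ - ν) 0 with hle | hlt
        · have e1 : z ^ (ρ - ν) ≤ a ^ (ρ - ν) :=
            Real.rpow_le_rpow_of_nonpos ha haz hle
          have e2 : a ^ (ρ - ν) = a ^ (σ - ν) * a ^ (ρ - σ) := by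
            rw [show ρ - ν = (σ - ν) + (ρ - σ) by ring, Real.rpow_add ha]
          have e3 : a ^ (ρ - σ) ≤ 1 :=
            Real.rpow_le_one ha.le (by linarith) (by linarith)
          calc z ^ (ρ - ν) ≤ a ^ (ρ - ν) := e1
            _ = a ^ (σ - ν) * a ^ (ρ - σ) := e2
            _ ≤ a ^ (σ - ν) * 1 :=
                mul_le_mul_of_nonneg_left e3 (Real.rpow_nonneg ha.le _)
            _ = a ^ (σ - ν) := mul_one _
        · have e1 : z ^ (ρ - ν) ≤ 1 :=
            Real.rpow_le_one hz0.le (by linarith) hlt.le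
          have e2 : (1:ℝ) ≤ a ^ (σ - ν) :=
            Real.one_le_rpow_of_pos_of_le_one_of_nonpos ha (by linarith) (by linarith)
          linarith
      have hGl := hGlow (by linarith : a ≤ 1/2)
      have hee : (1:ℝ) ≤ Real.exp 1 * Real.exp (-z/2) := by
        rw [← Real.exp_add]
        exact Real.one_le_exp (by linarith)
      calc z ^ ρ * besselK ν z
          ≤ z ^ ρ * (C₂ * z ^ (-ν)) :=
            mul_le_mul_of_nonneg_left h1 (Real.rpow_nonneg hz0.le _)
        _ = C₂ * (z ^ ρ * z ^ (-ν)) := by ring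
        _ = C₂ * z ^ (ρ - ν) := by rw [hzρν]
        _ ≤ C₂ * a ^ (σ - ν) := mul_le_mul_of_nonneg_left hstep hC₂.le
        _ = (C₂ / C₁) * (C₁ * a ^ (σ - ν)) := by field_simp
        _ ≤ (C₂ / C₁) * G := mul_le_mul_of_nonneg_left hGl (by positivity)
        _ = 1 * ((C₂ / C₁) * G) := (one_mul _).symm
        _ ≤ (Real.exp 1 * Real.exp (-z/2)) * ((C₂ / C₁) * G) := by
            apply mul_le_mul_of_nonneg_right hee
            exact mul_nonneg (by positivity) hG0
        _ = c3 * Real.exp (-z/2) * G := by rw [hc3def]; ring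

end BesselAux

/-- Exponential decay of `ψ_s'`. -/
theorem psi_deriv_exp_decay (s r : ℝ) (hs : s ∈ Set.Ioo (0:ℝ) 1)
    (hr : min (1 - s) (1/2) - s ≤ r) :
    ∃ c > 0, ∀ a : ℝ, 0 < a → ∀ z : ℝ, a ≤ z →
      |z ^ r * deriv (psi s) z| ≤
        c * Real.exp (-z / 2) *
          ((2 ^ (1 - s) / Real.Gamma s) * a ^ (min (1 - s) (1/2)) * Real.exp a *
            besselK (1 - s) a) := by
  obtain ⟨c, hc, hmain⟩ := BesselAux.main_bound s r hs hr
  refine ⟨c, hc, fun a ha z haz => ?_⟩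
  have hz0 : 0 < z := lt_of_lt_of_le ha haz
  have hs0 : 0 < s := hs.1
  have hΓ : 0 < Real.Gamma s := Real.Gamma_pos_of_pos hs0
  rw [BesselAux.deriv_psi s hs0 hz0]
  have hzr : z ^ r * -((2:ℝ) ^ (1 - s) / Real.Gamma s * z ^ s * besselK (1 - s) z) =
      -((2:ℝ) ^ (1 - s) / Real.Gamma s * (z ^ (r + s) * besselK (1 - s) z)) := by
    rw [Real.rpow_add hz0]
    ring
  rw [hzr, abs_neg, abs_of_nonneg (by
    apply mul_nonneg (by positivity)
    exact mul_nonneg (Real.rpow_nonneg hz0.le _) (BesselAux.besselK_nonneg _ _))]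
  have hmono := mul_le_mul_of_nonneg_left (hmain a ha z haz)
    (by positivity : (0:ℝ) ≤ (2:ℝ) ^ (1 - s) / Real.Gamma s)
  calc (2:ℝ) ^ (1 - s) / Real.Gamma s * (z ^ (r + s) * besselK (1 - s) z)
      ≤ (2:ℝ) ^ (1 - s) / Real.Gamma s *
          (c * Real.exp (-z / 2) *
            (a ^ (min (1 - s) (1/2)) * Real.exp a * besselK (1 - s) a)) := hmono
    _ = c * Real.exp (-z / 2) *
          ((2:ℝ) ^ (1 - s) / Real.Gamma s * a ^ (min (1 - s) (1/2)) * Real.exp a *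
            besselK (1 - s) a) := by ring
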